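/- Let ℓ be a positive odd integer and ζ ∈ ℂ a primitive ℓ-th root of unity. Then ∑_{t=1}^{ℓ-1} (-1)^t ζ^t / ([ℓ-t]_ζ! · [t]_ζ!) = (ζ - ζ^{-1})^ℓ · (1 - ℓ)/(2ℓ). -/

import Mathlib

open Finset

/-- The balanced quantum integer `[n]_ζ = (ζ^n - ζ^{-n})/(ζ - ζ^{-1})`. -/
noncomputable def qint (ζ : ℂ) (n : ℕ) : ℂ := (ζ ^ n - ζ⁻¹ ^ n) / (ζ - ζ⁻¹)

/-- The balanced quantum factorial `[m]_ζ! = ∏_{n=1}^m [n]_ζ`. -/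
noncomputable def qfact (ζ : ℂ) (m : ℕ) : ℂ := ∏ n ∈ Finset.Icc 1 m, qint ζ n

theorem sum_alternating_inv_qfact (ℓ : ℕ) (hℓ : 0 < ℓ) (hodd : Odd ℓ) (ζ : ℂ)
    (hζ : IsPrimitiveRoot ζ ℓ) :
    ∑ t ∈ Finset.Icc 1 (ℓ - 1), (-1 : ℂ) ^ t * ζ ^ t / (qfact ζ (ℓ - t) * qfact ζ t)
      = (ζ - ζ⁻¹) ^ ℓ * (1 - ℓ) / (2 * ℓ) := by
  rcases eq_or_ne ℓ 1 with rfl | hne1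
  · norm_num
  have hℓ3 : 3 ≤ ℓ := by
    have := Nat.odd_iff.mp hodd
    omega
  have hl0 : ℓ ≠ 0 := by omega
  have hζ0 : ζ ≠ 0 := hζ.ne_zero hl0
  have hcop : Nat.Coprime 2 ℓ := Nat.prime_two.coprime_iff_not_dvd.2 (by
    have := Nat.odd_iff.mp hodd; omega)
  have hq : IsPrimitiveRoot (ζ ^ 2) ℓ := hζ.pow_of_coprime 2 hcop
  have h2t : ∀ t : ℕ, 0 < t → t < ℓ → ζ ^ (2 * t) ≠ 1 := by
    intro t ht htl
    rw [pow_mul]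
    exact hq.pow_ne_one_of_pos_of_lt ht.ne' htl
  have hNe : ∀ t : ℕ, 0 < t → t < ℓ → ζ ^ t - ζ⁻¹ ^ t ≠ 0 := by
    intro t ht htl h
    apply h2t t ht htl
    rw [sub_eq_zero] at h
    have : ζ ^ (2 * t) = ζ ^ t * ζ ^ t := by rw [two_mul, pow_add]
    rw [this]
    nth_rewrite 1 [h]
    rw [inv_pow, inv_mul_cancel₀ (pow_ne_zero t hζ0)]
  -- P and qfact
  set P : ℕ → ℂ := fun m => ∏ n ∈ Finset.Icc 1 m, (ζ ^ n - ζ⁻¹ ^ n) with hP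
  have hqf : ∀ m : ℕ, qfact ζ m = P m / (ζ - ζ⁻¹) ^ m := by
    intro m
    rw [hP]
    simp only [qfact, qint, Finset.prod_div_distrib, Finset.prod_const, Nat.card_Icc,
      Nat.add_sub_cancel]
  have hzz : ζ - ζ⁻¹ ≠ 0 := by
    have := hNe 1 one_pos (by omega)
    simpa using this
  -- base : P (ℓ - 1) = ℓ
  have hfac : ∀ n : ℕ, ζ ^ n - ζ⁻¹ ^ n = ζ⁻¹ ^ n * (ζ ^ (2 * n) - 1) := by
    intro n
    rw [inv_pow, two_mul, pow_add]
    field_simp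
  obtain ⟨k, hk⟩ := hodd
  have hbase : P (ℓ - 1) = (ℓ : ℂ) := by
    rw [hP]
    simp only [hfac]
    rw [Finset.prod_mul_distrib, Finset.prod_pow_eq_pow_sum]
    have hIccE : Finset.Icc 1 (ℓ - 1) = (Finset.range ℓ).erase 0 := by
      ext x
      simp only [Finset.mem_Icc, Finset.mem_erase, Finset.mem_range]
      omega
    have hsum : ∑ n ∈ Finset.Icc 1 (ℓ - 1), n = ℓ * k := by
      have h2 : (∑ i ∈ Finset.range ℓ, i) * 2 = ℓ * (ℓ - 1) := Finset.sum_range_id_mul_two ℓ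
      have h3 : ∑ n ∈ Finset.Icc 1 (ℓ - 1), n = ∑ i ∈ Finset.range ℓ, i := by
        rw [hIccE, Finset.sum_erase (Finset.range ℓ) rfl]
      have h4 : ℓ * (ℓ - 1) = ℓ * k * 2 := by
        subst hk
        simp only [Nat.add_sub_cancel]
        ring
      refine Nat.eq_of_mul_eq_mul_right two_pos ?_
      rw [h3, h2, h4]
    rw [hsum, pow_mul, inv_pow, hζ.pow_eq_one, inv_one, one_pow, one_mul]
    -- now ∏ (ζ^(2n) - 1) = ℓ
    have hIcc : Finset.Icc 1 (ℓ - 1) = Finset.Ico 1 ℓ := by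
      rw [← Finset.Ico_add_one_right_eq_Icc]
      congr 1
      omega
    have hprim' : IsPrimitiveRoot (ζ ^ 2) ((ℓ - 1) + 1) := by
      rwa [Nat.sub_add_cancel (by omega)]
    have hmain := hprim'.prod_pow_sub_one_eq_order
    have heven : (-1 : ℂ) ^ (ℓ - 1) = 1 := by
      have : ℓ - 1 = 2 * k := by omega
      rw [this, pow_mul]
      norm_num
    rw [heven, one_mul] at hmain
    rw [hIcc, Finset.prod_Ico_eq_prod_range]
    have : ∀ i, ζ ^ (2 * (1 + i)) - 1 = (ζ ^ 2) ^ (i + 1) - 1 := by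
      intro i
      rw [← pow_mul]
      ring_nf
    simp only [this]
    rw [hmain, Nat.cast_sub (by omega : 1 ≤ ℓ)]
    push_cast
    ring
  have h5 : ∀ s : ℕ, (ζ ^ s - ζ⁻¹ ^ s) * ζ ^ s = ζ ^ (2 * s) - 1 := by
    intro s
    rw [sub_mul, ← pow_add, ← two_mul, inv_pow, inv_mul_cancel₀ (pow_ne_zero s hζ0)]
  have hkey : ∀ t : ℕ, 1 ≤ t → t ≤ ℓ - 1 →
      P (ℓ - t) * P t * ζ ^ t = (-1) ^ (t + 1) * ℓ * (ζ ^ (2 * t) - 1) := by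
    intro t ht
    induction t, ht using Nat.le_induction with
    | base =>
      intro _
      have hP1 : P 1 = ζ - ζ⁻¹ := by simp [hP]
      rw [hbase, hP1, pow_one]
      have : (ζ - ζ⁻¹) * ζ = ζ ^ (2 * 1) - 1 := by simpa using h5 1
      rw [mul_assoc, this]
      ring
    | succ t ht ih =>
      intro htl
      have ih' := ih (by omega)
      have hPt1 : P (t + 1) = P t * (ζ ^ (t + 1) - ζ⁻¹ ^ (t + 1)) :=
        Finset.prod_Icc_succ_top (by omega) _
      have hm : ℓ - t = (ℓ - (t + 1)) + 1 := by omega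
      have hPl : P (ℓ - t) = P (ℓ - (t + 1)) * (ζ ^ (ℓ - t) - ζ⁻¹ ^ (ℓ - t)) := by
        rw [hm]
        exact Finset.prod_Icc_succ_top (by omega) _
      have hmt : (ℓ - t) + t = ℓ := by omega
      have e1 : ζ ^ (ℓ - t) = ζ⁻¹ ^ t := by
        rw [inv_pow]
        refine eq_inv_of_mul_eq_one_left ?_
        rw [← pow_add, hmt, hζ.pow_eq_one]
      have e2 : ζ⁻¹ ^ (ℓ - t) = ζ ^ t := by
        rw [inv_pow, e1, inv_pow, inv_inv]
      have hflip : ζ ^ (ℓ - t) - ζ⁻¹ ^ (ℓ - t) = -(ζ ^ t - ζ⁻¹ ^ t) := by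
        rw [e1, e2]; ring
      rw [hPl, hflip] at ih'
      have hZne : ζ ^ (2 * t) - 1 ≠ 0 := sub_ne_zero.mpr (h2t t (by omega) (by omega))
      have h7 : (-(P (ℓ - (t + 1)) * P t)) * (ζ ^ (2 * t) - 1)
          = ((-1) ^ (t + 1) * (ℓ : ℂ)) * (ζ ^ (2 * t) - 1) := by
        linear_combination ih' + P (ℓ - (t + 1)) * P t * h5 t
      have hA := mul_right_cancel₀ hZne h7
      have hA' : P (ℓ - (t + 1)) * P t = (-1) ^ (t + 1 + 1) * (ℓ : ℂ) := by
        rw [pow_succ]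
        linear_combination -hA
      rw [hPt1, show P (ℓ - (t + 1)) * (P t * (ζ ^ (t + 1) - ζ⁻¹ ^ (t + 1))) * ζ ^ (t + 1)
          = (P (ℓ - (t + 1)) * P t) * ((ζ ^ (t + 1) - ζ⁻¹ ^ (t + 1)) * ζ ^ (t + 1)) by ring,
        hA', h5 (t + 1)]
  have hlC : (ℓ : ℂ) ≠ 0 := Nat.cast_ne_zero.mpr hl0
  have hterm : ∀ t ∈ Finset.Icc 1 (ℓ - 1),
      (-1 : ℂ) ^ t * ζ ^ t / (qfact ζ (ℓ - t) * qfact ζ t)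
        = -((ζ - ζ⁻¹) ^ ℓ / ℓ) * (ζ ^ (2 * t) / (ζ ^ (2 * t) - 1)) := by
    intro t htmem
    rw [Finset.mem_Icc] at htmem
    obtain ⟨ht1, ht2⟩ := htmem
    have hk2 := hkey t ht1 ht2
    have hZne : ζ ^ (2 * t) - 1 ≠ 0 := sub_ne_zero.mpr (h2t t (by omega) (by omega))
    have hPne : P (ℓ - t) * P t ≠ 0 := by
      intro h0
      rw [h0, zero_mul] at hk2
      exact (mul_ne_zero (mul_ne_zero (pow_ne_zero _ (by norm_num)) hlC) hZne) hk2.symm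
    have hpow : (ζ - ζ⁻¹) ^ (ℓ - t) * (ζ - ζ⁻¹) ^ t = (ζ - ζ⁻¹) ^ ℓ := by
      rw [← pow_add]
      congr 1
      omega
    rw [hqf, hqf, div_mul_div_comm, hpow, div_div_eq_mul_div,
      neg_mul, div_mul_div_comm, ← neg_div,
      div_eq_div_iff hPne (mul_ne_zero hlC hZne)]
    linear_combination ((ζ - ζ⁻¹) ^ ℓ * ζ ^ t) * hk2
  have hpair : ∀ t : ℕ, 1 ≤ t → t ≤ ℓ - 1 →
      ζ ^ (2 * t) / (ζ ^ (2 * t) - 1) + ζ ^ (2 * (ℓ - t)) / (ζ ^ (2 * (ℓ - t)) - 1) = 1 := by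
    intro t ht1 ht2
    have hZne : ζ ^ (2 * t) - 1 ≠ 0 := sub_ne_zero.mpr (h2t t (by omega) (by omega))
    have hZne' : ζ ^ (2 * (ℓ - t)) - 1 ≠ 0 :=
      sub_ne_zero.mpr (h2t (ℓ - t) (by omega) (by omega))
    have hinv : ζ ^ (2 * (ℓ - t)) = (ζ ^ (2 * t))⁻¹ := by
      refine eq_inv_of_mul_eq_one_left ?_
      rw [← pow_add]
      have h8 : 2 * (ℓ - t) + 2 * t = ℓ * 2 := by omega
      rw [h8, pow_mul, hζ.pow_eq_one, one_pow]
    rw [hinv] at hZne' ⊢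
    have hzt : ζ ^ (2 * t) ≠ 0 := pow_ne_zero _ hζ0
    have hZne2 : (1 : ℂ) - ζ ^ (2 * t) ≠ 0 := fun h => hZne (by linear_combination -h)
    field_simp
    ring
  have hsumf : ∑ t ∈ Finset.Icc 1 (ℓ - 1), ζ ^ (2 * t) / (ζ ^ (2 * t) - 1)
      = ((ℓ : ℂ) - 1) / 2 := by
    set f : ℕ → ℂ := fun t => ζ ^ (2 * t) / (ζ ^ (2 * t) - 1) with hf
    have hIcc : Finset.Icc 1 (ℓ - 1) = Finset.Ico 1 ℓ := by
      rw [← Finset.Ico_add_one_right_eq_Icc]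
      congr 1
      omega
    have hS1 : ∑ t ∈ Finset.Icc 1 (ℓ - 1), f t = ∑ i ∈ Finset.range (ℓ - 1), f (1 + i) := by
      rw [hIcc, Finset.sum_Ico_eq_sum_range]
    have hS2 : ∑ i ∈ Finset.range (ℓ - 1), f (1 + i)
        = ∑ i ∈ Finset.range (ℓ - 1), f (ℓ - 1 - i) := by
      rw [← Finset.sum_range_reflect]
      refine Finset.sum_congr rfl ?_
      intro i hi
      rw [Finset.mem_range] at hi
      congr 1
      omega
    have h2S : (∑ t ∈ Finset.Icc 1 (ℓ - 1), f t) * 2 = (ℓ : ℂ) - 1 := by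
      have : (∑ t ∈ Finset.Icc 1 (ℓ - 1), f t) * 2
          = ∑ i ∈ Finset.range (ℓ - 1), (f (1 + i) + f (ℓ - 1 - i)) := by
        rw [Finset.sum_add_distrib, ← hS1, ← hS2, ← hS1]
        ring
      rw [this]
      have hone : ∀ i ∈ Finset.range (ℓ - 1), f (1 + i) + f (ℓ - 1 - i) = 1 := by
        intro i hi
        rw [Finset.mem_range] at hi
        have := hpair (1 + i) (by omega) (by omega)
        have harg : ℓ - (1 + i) = ℓ - 1 - i := by omega
        rw [harg] at this
        exact this
      rw [Finset.sum_congr rfl hone, Finset.sum_const, Finset.card_range, nsmul_eq_mul, mul_one]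
      rw [Nat.cast_sub (by omega : 1 ≤ ℓ), Nat.cast_one]
    rw [eq_div_iff (by norm_num : (2 : ℂ) ≠ 0)]
    exact h2S
  rw [Finset.sum_congr rfl hterm, ← Finset.mul_sum, hsumf]
  field_simp
  ring
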